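/- arXiv:2112.02620 — 2 statements merged into one kernel-verified Lean document; each statement's English description precedes it below -/
import Mathlib

section
/- Let n ≥ 1, p > n, C₃ > 0, x ∈ ℝ^n, R > 0, and s > 0. Let μ be a Borel measure on ℝ^n with μ(Q(x,R)) < ∞, and let f : Q(x,R) → ℝ^n be a map such that for every integer j ≥ 0 and every generation-j dyadic subcube Q' of Q(x,R) one has diam f(Q') ≤ C₃·(diam Q')^{1−n/p}·μ(Q')^{1/p}. For each j ≥ 0 let M(j) denote the number of generation-j dyadic subcubes Q' of Q(x,R) with diam f(Q') > s (the 'major' cubes of generation j). Then there exists a constant C > 0, depending only on n, p, and C₃, such that for every integer m ≥ 0: ∑_{j=m}^∞ M(j) ≤ C·s^{−p}·(2^{−m}R)^{p−n}·μ(Q(x,R)). -/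
open Set Metric
open scoped ENNReal

noncomputable section

/-- Covering number: the smallest number of sets of diameter at most `r` needed to
cover `F` (`∞` if no finite such cover exists). -/
def coverN {X : Type*} [PseudoMetricSpace X] (F : Set X) (r : ℝ) : ℝ≥0∞ :=
  sInf {m : ℝ≥0∞ | ∃ 𝒰 : Finset (Set X), (𝒰.card : ℝ≥0∞) = m ∧
    (∀ U ∈ 𝒰, EMetric.diam U ≤ ENNReal.ofReal r) ∧ F ⊆ ⋃ U ∈ 𝒰, U}

/-- Regularized Assouad spectrum `dim_{A,reg}^θ(F)`. -/
def dimAreg {X : Type*} [PseudoMetricSpace X] (θ : ℝ) (F : Set X) : ℝ :=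
  sInf {α : ℝ | 0 < α ∧ ∃ C : ℝ, 0 < C ∧ ∀ x ∈ F, ∀ r R : ℝ,
    0 < r → r ≤ R ^ (1/θ) → R ^ (1/θ) < R → R < 1 →
    coverN (closedBall x R ∩ F) r ≤ ENNReal.ofReal (C * (R/r) ^ α)}

/-- (Unregularized) Assouad spectrum `dim_A^θ(F)`. -/
def dimAspec {X : Type*} [PseudoMetricSpace X] (θ : ℝ) (F : Set X) : ℝ :=
  sInf {α : ℝ | 0 < α ∧ ∃ C : ℝ, 0 < C ∧ ∀ x ∈ F, ∀ R : ℝ, 0 < R → R < 1 →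
    coverN (closedBall x R ∩ F) (R ^ (1/θ)) ≤ ENNReal.ofReal (C * (R / R ^ (1/θ)) ^ α)}

/-- Upper box-counting dimension of a (bounded) set. -/
def dimBupper {X : Type*} [PseudoMetricSpace X] (F : Set X) : ℝ :=
  sInf {α : ℝ | 0 < α ∧ ∃ C : ℝ, 0 < C ∧ ∀ r : ℝ, 0 < r → r ≤ diam F →
    coverN F r ≤ ENNReal.ofReal (C * r ^ (-α))}

/-- Assouad dimension. -/
def dimA {X : Type*} [PseudoMetricSpace X] (F : Set X) : ℝ :=
  sInf {α : ℝ | 0 < α ∧ ∃ C : ℝ, 0 < C ∧ ∀ x ∈ F, ∀ r R : ℝ, 0 < r → r ≤ R →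
    coverN (closedBall x R ∩ F) r ≤ ENNReal.ofReal (C * (R/r) ^ α)}

/-- Quasi-Assouad dimension: `sup_{0<θ<1} dim_{A,reg}^θ(F)`. -/
def dimqA {X : Type*} [PseudoMetricSpace X] (F : Set X) : ℝ :=
  sSup ((fun θ => dimAreg θ F) '' Ioo (0:ℝ) 1)

open Classical in
/-- Phase-transition parameter `ρ(F)`. -/
def rhoPT {X : Type*} [PseudoMetricSpace X] (F : Set X) : ℝ :=
  if ∃ θ ∈ Ioo (0:ℝ) 1, dimAreg θ F = dimqA F
  then sInf {θ | θ ∈ Ioo (0:ℝ) 1 ∧ dimAreg θ F = dimqA F}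
  else 1

/-- The axes-parallel cube `Q(x,R) = ∏ [xᵢ - R, xᵢ + R]`. -/
def cubeQ {n : ℕ} (x : EuclideanSpace ℝ (Fin n)) (R : ℝ) : Set (EuclideanSpace ℝ (Fin n)) :=
  {y | ∀ i, x i - R ≤ y i ∧ y i ≤ x i + R}

/-- The generation-`m` dyadic subcube of `Q(x,R)` with index `k`. -/
def dyadicCube {n : ℕ} (x : EuclideanSpace ℝ (Fin n)) (R : ℝ) (m : ℕ)
    (k : Fin n → Fin (2 ^ m)) : Set (EuclideanSpace ℝ (Fin n)) :=
  {y | ∀ i, x i - R + (k i : ℝ) * (2 * R / 2 ^ m) ≤ y i ∧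
        y i ≤ x i - R + ((k i : ℝ) + 1) * (2 * R / 2 ^ m)}

/-- `N_d(B(x,R) ∩ F, m)`: the number of generation-`m` dyadic subcubes of `Q(x,R)`
that intersect `B(x,R) ∩ F`. -/
def Nd {n : ℕ} (x : EuclideanSpace ℝ (Fin n)) (R : ℝ)
    (F : Set (EuclideanSpace ℝ (Fin n))) (m : ℕ) : ℕ :=
  Nat.card {k : Fin n → Fin (2 ^ m) // (dyadicCube x R m k ∩ (closedBall x R ∩ F)).Nonempty}

/-- `f` is `η`-quasisymmetric on the set `S`. -/
def QSOn {X Y : Type*} [PseudoMetricSpace X] [PseudoMetricSpace Y]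
    (η : ℝ → ℝ) (f : X → Y) (S : Set X) : Prop :=
  ∀ x ∈ S, ∀ y ∈ S, ∀ z ∈ S, x ≠ z →
    dist (f x) (f y) ≤ η (dist x y / dist x z) * dist (f x) (f z)

/-- Distance between two sets. -/
def setDist {X : Type*} [PseudoMetricSpace X] (A B : Set X) : ℝ :=
  sInf {d : ℝ | ∃ a ∈ A, ∃ b ∈ B, d = dist a b}

end


open MeasureTheory Classical

lemma aux16_subset {n : ℕ} (x : EuclideanSpace ℝ (Fin n)) {R : ℝ} (hR : 0 < R)
    (j : ℕ) (k : Fin n → Fin (2 ^ j)) : dyadicCube x R j k ⊆ cubeQ x R := by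
  intro y hy i
  obtain ⟨h1, h2⟩ := hy i
  have hh : (0:ℝ) < 2 * R / 2 ^ j := by positivity
  have hk0 : (0:ℝ) ≤ (k i : ℝ) := Nat.cast_nonneg _
  have hk1 : ((k i : ℝ) + 1) ≤ 2 ^ j := by
    have := (k i).2
    exact_mod_cast Nat.succ_le_of_lt this
  constructor
  · nlinarith
  · have e : ((2:ℝ)^j) * (2 * R / 2 ^ j) = 2 * R := by field_simp
    nlinarith [mul_le_mul_of_nonneg_right hk1 hh.le]

lemma aux16_meas {n : ℕ} (x : EuclideanSpace ℝ (Fin n)) (R : ℝ)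
    (j : ℕ) (k : Fin n → Fin (2 ^ j)) : MeasurableSet (dyadicCube x R j k) := by
  have : dyadicCube x R j k = ⋂ i, (fun y : EuclideanSpace ℝ (Fin n) => y i) ⁻¹'
      Icc (x i - R + (k i : ℝ) * (2 * R / 2 ^ j)) (x i - R + ((k i : ℝ) + 1) * (2 * R / 2 ^ j)) := by
    ext y; simp [dyadicCube, Set.mem_iInter, Icc]
  rw [this]
  exact MeasurableSet.iInter fun i => ((measurable_pi_apply i).comp (WithLp.measurable_ofLp 2 _)) measurableSet_Icc

lemma aux16_measQ {n : ℕ} (x : EuclideanSpace ℝ (Fin n)) (R : ℝ) :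
    MeasurableSet (cubeQ x R) := by
  have : cubeQ x R = ⋂ i, (fun y : EuclideanSpace ℝ (Fin n) => y i) ⁻¹' Icc (x i - R) (x i + R) := by
    ext y; simp [cubeQ, Set.mem_iInter, Icc]
  rw [this]
  exact MeasurableSet.iInter fun i => ((measurable_pi_apply i).comp (WithLp.measurable_ofLp 2 _)) measurableSet_Icc

lemma aux16_diam {n : ℕ} (x : EuclideanSpace ℝ (Fin n)) {R : ℝ} (hR : 0 < R)
    (j : ℕ) (k : Fin n → Fin (2 ^ j)) :
    diam (dyadicCube x R j k) ≤ Real.sqrt n * (2 * R / 2 ^ j) := by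
  have hh : (0:ℝ) ≤ 2 * R / 2 ^ j := by positivity
  apply diam_le_of_forall_dist_le (by positivity)
  intro y hy z hz
  rw [EuclideanSpace.dist_eq]
  have hb : ∀ i, dist (y i) (z i) ^ 2 ≤ (2 * R / 2 ^ j)^2 := by
    intro i
    obtain ⟨hy1, hy2⟩ := hy i
    obtain ⟨hz1, hz2⟩ := hz i
    have : |y i - z i| ≤ 2 * R / 2 ^ j := by
      rw [abs_le]; constructor <;> nlinarith
    rw [Real.dist_eq]
    nlinarith [abs_nonneg (y i - z i)]
  calc Real.sqrt (∑ i, dist (y i) (z i) ^ 2) ≤ Real.sqrt (∑ _i : Fin n, (2 * R / 2 ^ j)^2) :=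
        Real.sqrt_le_sqrt (Finset.sum_le_sum fun i _ => hb i)
    _ = Real.sqrt n * (2 * R / 2 ^ j) := by
        rw [Finset.sum_const, Finset.card_univ, Fintype.card_fin, nsmul_eq_mul,
          Real.sqrt_mul (by positivity), Real.sqrt_sq hh]

open Classical in
lemma aux16_overlap {n : ℕ} (x : EuclideanSpace ℝ (Fin n)) {R : ℝ} (hR : 0 < R)
    (j : ℕ) (y : EuclideanSpace ℝ (Fin n)) :
    (Finset.univ.filter (fun k : Fin n → Fin (2 ^ j) => y ∈ dyadicCube x R j k)).card ≤ 2 ^ n := by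
  have hh : (0:ℝ) < 2 * R / 2 ^ j := by positivity
  set h := 2 * R / 2 ^ j with hdef
  have hfe : (Finset.univ.filter (fun k : Fin n → Fin (2 ^ j) => y ∈ dyadicCube x R j k))
      = Fintype.piFinset (fun i => Finset.univ.filter
          (fun t : Fin (2 ^ j) => x i - R + (t : ℝ) * h ≤ y i ∧ y i ≤ x i - R + ((t : ℝ) + 1) * h)) := by
    ext k
    rw [Finset.mem_filter, Fintype.mem_piFinset]
    simp [dyadicCube, hdef]
  rw [hfe, Fintype.card_piFinset]
  calc ∏ i, (Finset.univ.filter (fun t : Fin (2 ^ j) =>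
          x i - R + (t : ℝ) * h ≤ y i ∧ y i ≤ x i - R + ((t : ℝ) + 1) * h)).card
      ≤ ∏ _i : Fin n, 2 := by
        apply Finset.prod_le_prod
        · intro i _; exact Nat.zero_le _
        · intro i _
          by_contra hc
          push_neg at hc
          obtain ⟨a, b, c, ha, hb, hc', hab, hac, hbc⟩ := Finset.two_lt_card_iff.mp hc
          simp only [Finset.mem_filter, Finset.mem_univ, true_and] at ha hb hc'
          have hane : (a:ℕ) ≠ (b:ℕ) := fun e => hab (Fin.ext e)
          have hane2 : (a:ℕ) ≠ (c:ℕ) := fun e => hac (Fin.ext e)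
          have hane3 : (b:ℕ) ≠ (c:ℕ) := fun e => hbc (Fin.ext e)
          obtain ⟨u, v, hu, hv, huv⟩ : ∃ u v : ℕ, (u = a ∨ u = b ∨ u = c) ∧
              (v = a ∨ v = b ∨ v = c) ∧ u + 2 ≤ v :=
            ⟨min (a:ℕ) (min b c), max (a:ℕ) (max b c), by omega, by omega, by omega⟩
          have hlow : x i - R + (v:ℝ) * h ≤ y i := by
            rcases hv with rfl|rfl|rfl
            exacts [ha.1, hb.1, hc'.1]
          have hup : y i ≤ x i - R + ((u:ℝ)+1) * h := by
            rcases hu with rfl|rfl|rfl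
            exacts [ha.2, hb.2, hc'.2]
          have h1 : (v:ℝ) ≤ (u:ℝ) + 1 := by nlinarith
          have h2 : (u:ℝ) + 2 ≤ (v:ℝ) := by exact_mod_cast huv
          linarith
      _ = 2 ^ n := by simp

open Classical in
lemma aux16_sum {n : ℕ} (x : EuclideanSpace ℝ (Fin n)) {R : ℝ} (hR : 0 < R) (j : ℕ)
    (μ : Measure (EuclideanSpace ℝ (Fin n))) :
    ∑ k : Fin n → Fin (2 ^ j), μ (dyadicCube x R j k) ≤ 2 ^ n * μ (cubeQ x R) := by
  have hmeas := fun k : Fin n → Fin (2^j) => aux16_meas x R j k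
  calc ∑ k : Fin n → Fin (2^j), μ (dyadicCube x R j k)
      = ∑ k : Fin n → Fin (2^j), ∫⁻ y, (dyadicCube x R j k).indicator 1 y ∂μ := by
        simp_rw [lintegral_indicator_one (hmeas _)]
    _ = ∫⁻ y, ∑ k : Fin n → Fin (2^j), (dyadicCube x R j k).indicator 1 y ∂μ :=
        (lintegral_finset_sum _ fun k _ => measurable_const.indicator (hmeas k)).symm
    _ ≤ ∫⁻ y, (2^n : ℝ≥0∞) * (cubeQ x R).indicator 1 y ∂μ := by
        apply lintegral_mono
        intro y
        by_cases hy : y ∈ cubeQ x R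
        · have heq : ∑ k : Fin n → Fin (2^j), (dyadicCube x R j k).indicator (1 : EuclideanSpace ℝ (Fin n) → ℝ≥0∞) y
              = ((Finset.univ.filter (fun k : Fin n → Fin (2^j) => y ∈ dyadicCube x R j k)).card : ℝ≥0∞) := by
            simp only [Set.indicator_apply, Pi.one_apply]
            rw [Finset.sum_boole]
          show (∑ k : Fin n → Fin (2^j), (dyadicCube x R j k).indicator (1 : EuclideanSpace ℝ (Fin n) → ℝ≥0∞) y)
              ≤ 2^n * (cubeQ x R).indicator (1 : EuclideanSpace ℝ (Fin n) → ℝ≥0∞) y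
          rw [heq, Set.indicator_of_mem hy, Pi.one_apply, mul_one]
          calc ((Finset.univ.filter (fun k : Fin n → Fin (2^j) => y ∈ dyadicCube x R j k)).card : ℝ≥0∞)
              ≤ ((2^n : ℕ) : ℝ≥0∞) := Nat.cast_le.mpr (aux16_overlap x hR j y)
            _ = (2^n : ℝ≥0∞) := by push_cast; ring
        · have hz : ∀ k : Fin n → Fin (2^j), (dyadicCube x R j k).indicator (1 : EuclideanSpace ℝ (Fin n) → ℝ≥0∞) y = 0 :=
            fun k => Set.indicator_of_notMem (fun hmem => hy (aux16_subset x hR j k hmem)) _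
          simp [hz]
    _ = 2^n * μ (cubeQ x R) := by
        rw [lintegral_const_mul' _ _ (by simp : (2:ℝ≥0∞)^n ≠ ⊤),
          lintegral_indicator_one (aux16_measQ x R)]

/-- counting estimate for major dyadic cubes under a Morrey–Sobolev-type
diameter bound (key estimate in Lemma 4.1 of the paper). -/
theorem stmt16 {n : ℕ} (hn : 1 ≤ n) (p C₃ : ℝ) (hp : (n : ℝ) < p) (hC₃ : 0 < C₃) :
    ∃ C : ℝ, 0 < C ∧
      ∀ (x : EuclideanSpace ℝ (Fin n)) (R : ℝ), 0 < R → ∀ s : ℝ, 0 < s →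
      ∀ μ : MeasureTheory.Measure (EuclideanSpace ℝ (Fin n)), μ (cubeQ x R) < ⊤ →
      ∀ f : EuclideanSpace ℝ (Fin n) → EuclideanSpace ℝ (Fin n),
        (∀ (j : ℕ) (k : Fin n → Fin (2 ^ j)),
          diam (f '' dyadicCube x R j k) ≤
            C₃ * diam (dyadicCube x R j k) ^ (1 - (n : ℝ) / p) *
              (μ (dyadicCube x R j k)).toReal ^ (1 / p)) →
      ∀ m : ℕ,
        (∑' j : ℕ,
            (Nat.card {k : Fin n → Fin (2 ^ (m + j)) //
                s < diam (f '' dyadicCube x R (m + j) k)} : ℝ≥0∞))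
          ≤ ENNReal.ofReal (C * s ^ (-p) * (R / 2 ^ m) ^ (p - (n : ℝ))) * μ (cubeQ x R) := by
  classical
  have hn0 : (0:ℝ) < n := by exact_mod_cast hn
  have hp0 : (0:ℝ) < p := lt_trans hn0 hp
  have hpn : (0:ℝ) < p - n := by linarith
  have hsq : 0 < Real.sqrt n := Real.sqrt_pos.mpr hn0
  set q : ℝ := ((2:ℝ) ^ (p - (n:ℝ)))⁻¹ with hqdef
  have h2pn : (1:ℝ) < (2:ℝ) ^ (p - (n:ℝ)) :=
    Real.one_lt_rpow_iff_of_pos (by norm_num) |>.mpr (Or.inl ⟨by norm_num, hpn⟩)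
  have hq0 : 0 < q := by positivity
  have hq1 : q < 1 := by
    rw [hqdef]
    exact inv_lt_one_of_one_lt₀ h2pn
  have hC3p : (0:ℝ) < C₃ ^ p := Real.rpow_pos_of_pos hC₃ p
  have hA1 : (0:ℝ) < (Real.sqrt n * 2) ^ (p - (n:ℝ)) :=
    Real.rpow_pos_of_pos (by positivity) _
  refine ⟨2^n * C₃^p * (Real.sqrt n * 2) ^ (p - (n:ℝ)) * (1 - q)⁻¹,
    mul_pos (mul_pos (mul_pos (by positivity) hC3p) hA1) (by rw [inv_pos]; linarith), ?_⟩
  intro x R hR s hs μ hμ f hf m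
  set D : ℕ → ℝ := fun j => Real.sqrt n * (2 * R / 2 ^ j) with hDdef
  have hD : ∀ j, 0 < D j := fun j => by positivity
  set ε : ℕ → ℝ := fun j => s ^ p / (C₃ ^ p * (D j) ^ (p - (n:ℝ))) with hεdef
  have hε : ∀ j, 0 < ε j := fun j => by
    have := Real.rpow_pos_of_pos (hD j) (p - (n:ℝ))
    have := Real.rpow_pos_of_pos hs p
    positivity
  have hμne : ∀ j (k : Fin n → Fin (2^j)), μ (dyadicCube x R j k) ≠ ⊤ := fun j k =>
    (lt_of_le_of_lt (measure_mono (aux16_subset x hR j k)) hμ).ne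
  -- Claim A : major cubes have measure at least ε j
  have claimA : ∀ (j : ℕ) (k : Fin n → Fin (2^j)), s < diam (f '' dyadicCube x R j k) →
      ENNReal.ofReal (ε j) ≤ μ (dyadicCube x R j k) := by
    intro j k hk
    have hd0 : 0 ≤ diam (dyadicCube x R j k) := diam_nonneg
    have hdD : diam (dyadicCube x R j k) ≤ D j := aux16_diam x hR j k
    set μr := (μ (dyadicCube x R j k)).toReal with hμrdef
    have hμr0 : 0 ≤ μr := ENNReal.toReal_nonneg
    have he : 0 < 1 - (n:ℝ)/p := by
      rw [sub_pos]; exact (div_lt_one hp0).mpr hp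
    have step1 : s < C₃ * (D j) ^ (1 - (n:ℝ)/p) * μr ^ (1/p) := by
      calc s < C₃ * diam (dyadicCube x R j k) ^ (1 - (n:ℝ)/p) * μr ^ (1/p) :=
            lt_of_lt_of_le hk (hf j k)
        _ ≤ C₃ * (D j) ^ (1 - (n:ℝ)/p) * μr ^ (1/p) := by
            apply mul_le_mul_of_nonneg_right _ (Real.rpow_nonneg hμr0 _)
            exact mul_le_mul_of_nonneg_left (Real.rpow_le_rpow hd0 hdD he.le) hC₃.le
    have hBpos : 0 < C₃ * (D j) ^ (1 - (n:ℝ)/p) :=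
      mul_pos hC₃ (Real.rpow_pos_of_pos (hD j) _)
    have step2 : s / (C₃ * (D j) ^ (1 - (n:ℝ)/p)) < μr ^ (1/p) := by
      rw [div_lt_iff₀ hBpos]
      nlinarith [step1]
    have step3 : (s / (C₃ * (D j) ^ (1 - (n:ℝ)/p))) ^ p < μr := by
      have hmono := Real.rpow_lt_rpow (by positivity) step2 hp0
      rwa [← Real.rpow_mul hμr0, one_div_mul_cancel (ne_of_gt hp0), Real.rpow_one] at hmono
    have step4 : ε j = (s / (C₃ * (D j) ^ (1 - (n:ℝ)/p))) ^ p := by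
      rw [Real.div_rpow hs.le hBpos.le,
        Real.mul_rpow hC₃.le (Real.rpow_nonneg (hD j).le _), ← Real.rpow_mul (hD j).le]
      have hexp : (1 - (n:ℝ)/p) * p = p - n := by field_simp
      rw [hexp]
    have hfin : ε j < μr := step4 ▸ step3
    calc ENNReal.ofReal (ε j) ≤ ENNReal.ofReal μr := ENNReal.ofReal_le_ofReal hfin.le
      _ = μ (dyadicCube x R j k) := ENNReal.ofReal_toReal (hμne j k)
  -- Claim B : counting bound per generation
  have claimB : ∀ j : ℕ,
      (Nat.card {k : Fin n → Fin (2^j) // s < diam (f '' dyadicCube x R j k)} : ℝ≥0∞)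
        ≤ (2^n * μ (cubeQ x R)) * ENNReal.ofReal ((ε j)⁻¹) := by
    intro j
    set T := Finset.univ.filter
      (fun k : Fin n → Fin (2^j) => s < diam (f '' dyadicCube x R j k)) with hTdef
    have hcard : (Nat.card {k : Fin n → Fin (2^j) // s < diam (f '' dyadicCube x R j k)}) = T.card := by
      rw [Nat.card_eq_fintype_card, Fintype.card_subtype]
    have hmul : (T.card : ℝ≥0∞) * ENNReal.ofReal (ε j) ≤ 2^n * μ (cubeQ x R) := by
      calc (T.card : ℝ≥0∞) * ENNReal.ofReal (ε j) = ∑ _k ∈ T, ENNReal.ofReal (ε j) := by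
            rw [Finset.sum_const, nsmul_eq_mul]
        _ ≤ ∑ k ∈ T, μ (dyadicCube x R j k) := Finset.sum_le_sum fun k hkT =>
            claimA j k (Finset.mem_filter.mp hkT).2
        _ ≤ ∑ k : Fin n → Fin (2^j), μ (dyadicCube x R j k) :=
            Finset.sum_le_sum_of_subset (Finset.subset_univ T)
        _ ≤ 2^n * μ (cubeQ x R) := aux16_sum x hR j μ
    have hne : ENNReal.ofReal (ε j) ≠ 0 := ne_of_gt (ENNReal.ofReal_pos.mpr (hε j))
    rw [hcard]
    have := (ENNReal.le_div_iff_mul_le (Or.inl hne) (Or.inl ENNReal.ofReal_ne_top)).mpr hmul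
    rwa [div_eq_mul_inv, ← ENNReal.ofReal_inv_of_pos (hε j)] at this
  -- Geometric identity for (ε j)⁻¹
  set K : ℝ := C₃^p * (Real.sqrt n * (2*R)) ^ (p - (n:ℝ)) / s^p with hKdef
  have hpow2 : ∀ j : ℕ, ((2:ℝ)^j) ^ (p - (n:ℝ)) = ((2:ℝ)^(p-(n:ℝ)))^j := by
    intro j
    rw [← Real.rpow_natCast (2:ℝ) j, ← Real.rpow_natCast ((2:ℝ)^(p-(n:ℝ))) j,
      ← Real.rpow_mul (by norm_num : (0:ℝ) ≤ 2), ← Real.rpow_mul (by positivity), mul_comm]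
  have hDpow : ∀ j : ℕ, (D j) ^ (p - (n:ℝ)) = (Real.sqrt n * (2*R)) ^ (p - (n:ℝ)) * q ^ j := by
    intro j
    have hDj : D j = (Real.sqrt n * (2*R)) / 2^j := by
      simp only [hDdef]; ring
    rw [hDj, Real.div_rpow (by positivity) (by positivity), hpow2 j, hqdef,
      div_eq_mul_inv, ← inv_pow]
  have hεinv : ∀ j : ℕ, (ε j)⁻¹ = K * q ^ j := by
    intro j
    have hsp : s ^ p ≠ 0 := (Real.rpow_pos_of_pos hs p).ne'
    have hAr : (Real.sqrt n * (2*R)) ^ (p - (n:ℝ)) ≠ 0 :=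
      (Real.rpow_pos_of_pos (by positivity) _).ne'
    have hqj : q ^ j ≠ 0 := by positivity
    rw [hεdef]
    simp only
    rw [hDpow j, inv_div, hKdef]
    field_simp
  have hK0 : 0 < K := by
    have := Real.rpow_pos_of_pos (show (0:ℝ) < Real.sqrt n * (2*R) by positivity) (p - (n:ℝ))
    have := Real.rpow_pos_of_pos hs p
    positivity
  -- Final calculation
  calc (∑' j : ℕ, (Nat.card {k : Fin n → Fin (2 ^ (m + j)) //
          s < diam (f '' dyadicCube x R (m + j) k)} : ℝ≥0∞))
      ≤ ∑' j : ℕ, (2^n * μ (cubeQ x R)) * ENNReal.ofReal ((ε (m+j))⁻¹) :=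
        ENNReal.tsum_le_tsum fun j => claimB (m+j)
    _ = (2^n * μ (cubeQ x R)) * ∑' j : ℕ, ENNReal.ofReal ((ε (m+j))⁻¹) :=
        ENNReal.tsum_mul_left
    _ = (2^n * μ (cubeQ x R)) * (ENNReal.ofReal (K * q^m) * (1 - ENNReal.ofReal q)⁻¹) := by
        congr 1
        have hterm : ∀ j : ℕ, ENNReal.ofReal ((ε (m+j))⁻¹)
            = ENNReal.ofReal (K * q^m) * (ENNReal.ofReal q)^j := by
          intro j
          rw [hεinv (m+j), pow_add, ← mul_assoc,
            ENNReal.ofReal_mul (by positivity), ENNReal.ofReal_pow hq0.le]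
        rw [tsum_congr hterm, ENNReal.tsum_mul_left, ENNReal.tsum_geometric]
    _ = ENNReal.ofReal ((2:ℝ)^n * (K * q^m) * (1-q)⁻¹) * μ (cubeQ x R) := by
        have h1 : (1:ℝ≥0∞) - ENNReal.ofReal q = ENNReal.ofReal (1 - q) := by
          rw [← ENNReal.ofReal_one, ← ENNReal.ofReal_sub _ hq0.le]
        have h2 : ((2:ℝ≥0∞)^n) = ENNReal.ofReal ((2:ℝ)^n) := by
          rw [ENNReal.ofReal_pow (by norm_num : (0:ℝ) ≤ 2)]
          norm_num
        have hKq : 0 ≤ K * q^m := (mul_pos hK0 (pow_pos hq0 m)).le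
        have h2n : (0:ℝ) ≤ 2^n := by positivity
        rw [h1, ← ENNReal.ofReal_inv_of_pos (by linarith : (0:ℝ) < 1 - q),
          ENNReal.ofReal_mul (mul_nonneg h2n hKq), ENNReal.ofReal_mul h2n, ← h2]
        ring
    _ = ENNReal.ofReal ((2^n * C₃^p * (Real.sqrt n * 2) ^ (p - (n:ℝ)) * (1 - q)⁻¹)
          * s ^ (-p) * (R / 2 ^ m) ^ (p - (n:ℝ))) * μ (cubeQ x R) := by
        congr 2
        have hsneg : s ^ (-p) = (s ^ p)⁻¹ := Real.rpow_neg hs.le p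
        have hRm : (R / 2 ^ m) ^ (p - (n:ℝ)) = R ^ (p - (n:ℝ)) * q ^ m := by
          rw [Real.div_rpow hR.le (by positivity), hpow2 m, hqdef, div_eq_mul_inv, ← inv_pow]
        have hsplit : (Real.sqrt n * (2*R)) ^ (p - (n:ℝ))
            = (Real.sqrt n * 2) ^ (p - (n:ℝ)) * R ^ (p - (n:ℝ)) := by
          rw [← Real.mul_rpow (by positivity) hR.le, mul_assoc]
        rw [hsneg, hRm, hKdef, hsplit]
        ring
end

section
/- Let X ⊆ ℝ^n be bounded, let 0 < α ≤ 1 ≤ β < ∞ and C > 0, and let f : X → ℝ^n be a homeomorphism onto its image satisfying C^{−1}·|x − x'|^β ≤ |f(x) − f(x')| ≤ C·|x − x'|^α for all x, x' ∈ X (an (α,β)-bi-Hölder homeomorphism). Then for every 0 < θ < α/β: ((1 − βθ/α)/(β(1 − θ)))·dim_{A,reg}^{βθ/α}(X) ≤ dim_{A,reg}^θ(f(X)) ≤ ((1 − αθ/β)/(α(1 − θ)))·dim_{A,reg}^{αθ/β}(X). -/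
open Set Metric
open scoped ENNReal

section Aux

variable {Z : Type*} [PseudoMetricSpace Z]

/-- The defining set of `dimAreg`. -/
def SS (θ : ℝ) (F : Set Z) : Set ℝ :=
  {t : ℝ | 0 < t ∧ ∃ C : ℝ, 0 < C ∧ ∀ x ∈ F, ∀ r R : ℝ,
    0 < r → r ≤ R ^ (1/θ) → R ^ (1/θ) < R → R < 1 →
    coverN (closedBall x R ∩ F) r ≤ ENNReal.ofReal (C * (R/r) ^ t)}

lemma dimAreg_eq (θ : ℝ) (F : Set Z) : dimAreg θ F = sInf (SS θ F) := rfl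

lemma coverN_le_card (F : Set Z) (r : ℝ) (𝒰 : Finset (Set Z))
    (hd : ∀ U ∈ 𝒰, EMetric.diam U ≤ ENNReal.ofReal r) (hc : F ⊆ ⋃ U ∈ 𝒰, U) :
    coverN F r ≤ 𝒰.card := sInf_le ⟨𝒰, rfl, hd, hc⟩

lemma coverN_mono {F G : Set Z} (h : F ⊆ G) (r : ℝ) : coverN F r ≤ coverN G r := by
  apply sInf_le_sInf
  rintro m ⟨𝒰, h1, h2, h3⟩
  exact ⟨𝒰, h1, h2, h.trans h3⟩

lemma exists_cover {F : Set Z} {r : ℝ} (h : coverN F r ≠ ⊤) :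
    ∃ 𝒰 : Finset (Set Z), (∀ U ∈ 𝒰, EMetric.diam U ≤ ENNReal.ofReal r) ∧
      (F ⊆ ⋃ U ∈ 𝒰, U) ∧ (𝒰.card : ℝ≥0∞) ≤ coverN F r + 1 := by
  have h2 : coverN F r < coverN F r + 1 := ENNReal.lt_add_right h one_ne_zero
  obtain ⟨m, hm, hlt⟩ := sInf_lt_iff.mp h2
  obtain ⟨𝒰, rfl, hd, hc⟩ := hm
  exact ⟨𝒰, hd, hc, hlt.le⟩

lemma coverN_biUnion_le {ι : Type*} (T : Finset ι) (G : ι → Set Z) (r : ℝ) :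
    coverN (⋃ t ∈ T, G t) r ≤ ∑ t ∈ T, (coverN (G t) r + 1) := by
  classical
  by_cases htop : ∀ t ∈ T, coverN (G t) r ≠ ⊤
  · choose 𝒰 hd hc hcard using fun t : {t // t ∈ T} => exists_cover (htop t t.2)
    refine le_trans (coverN_le_card _ _ (T.attach.biUnion 𝒰) ?_ ?_) ?_
    · intro U hU
      obtain ⟨t, _, hUt⟩ := Finset.mem_biUnion.mp hU
      exact hd t U hUt
    · intro x hx
      obtain ⟨t, ht, hxt⟩ := mem_iUnion₂.mp hx
      obtain ⟨U, hU, hxU⟩ := mem_iUnion₂.mp (hc ⟨t, ht⟩ hxt)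
      exact mem_iUnion₂.mpr ⟨U, Finset.mem_biUnion.mpr ⟨⟨t, ht⟩, Finset.mem_attach _ _, hU⟩, hxU⟩
    · calc ((T.attach.biUnion 𝒰).card : ℝ≥0∞)
          ≤ ((∑ t ∈ T.attach, (𝒰 t).card : ℕ) : ℝ≥0∞) := Nat.cast_le.2 Finset.card_biUnion_le
        _ = ∑ t ∈ T.attach, ((𝒰 t).card : ℝ≥0∞) := by push_cast; rfl
        _ ≤ ∑ t ∈ T.attach, (coverN (G t) r + 1) := Finset.sum_le_sum fun t _ => hcard t
        _ = ∑ t ∈ T, (coverN (G t) r + 1) := by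
            rw [← Finset.sum_attach T (fun t => coverN (G t) r + 1)]
  · push_neg at htop
    obtain ⟨t, ht, htop⟩ := htop
    have : (⊤ : ℝ≥0∞) ≤ ∑ t ∈ T, (coverN (G t) r + 1) := by
      refine le_trans ?_ (Finset.single_le_sum (f := fun t => coverN (G t) r + 1)
        (fun _ _ => zero_le) ht)
      simp [htop]
    exact le_top.trans this

lemma coverN_image_le {A S : Set Z} (h : Z → Z) {c a r ρ : ℝ} (hc : 0 < c) (ha : 0 < a)
    (hρ : 0 ≤ ρ) (hr : c * ρ ^ a ≤ r) (hS : S ⊆ A)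
    (hh : ∀ x ∈ A, ∀ y ∈ A, dist (h x) (h y) ≤ c * dist x y ^ a) :
    coverN (h '' S) r ≤ coverN S ρ + 1 := by
  classical
  by_cases htop : coverN S ρ = ⊤
  · simp [htop]
  obtain ⟨𝒰, hd, hc', hcard⟩ := exists_cover htop
  have hr0 : 0 ≤ r := le_trans (by positivity) hr
  refine le_trans (coverN_le_card _ _ (𝒰.image (fun U => h '' (U ∩ S))) ?_ ?_) ?_
  · intro V hV
    obtain ⟨U, hU, rfl⟩ := Finset.mem_image.mp hV
    apply EMetric.diam_le
    rintro p ⟨u, ⟨huU, huS⟩, rfl⟩ q ⟨v, ⟨hvU, hvS⟩, rfl⟩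
    rw [edist_dist]
    apply ENNReal.ofReal_le_ofReal
    have hduv : dist u v ≤ ρ := by
      have h1 : edist u v ≤ ENNReal.ofReal ρ :=
        le_trans (EMetric.edist_le_diam_of_mem huU hvU) (hd U hU)
      exact (edist_le_ofReal hρ).mp h1
    calc dist (h u) (h v) ≤ c * dist u v ^ a := hh u (hS huS) v (hS hvS)
      _ ≤ c * ρ ^ a := by
          have := Real.rpow_le_rpow dist_nonneg hduv ha.le
          nlinarith
      _ ≤ r := hr
  · rintro p ⟨u, huS, rfl⟩
    obtain ⟨U, hU, huU⟩ := mem_iUnion₂.mp (hc' huS)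
    exact mem_iUnion₂.mpr ⟨h '' (U ∩ S), Finset.mem_image.mpr ⟨U, hU, rfl⟩, ⟨u, ⟨huU, huS⟩, rfl⟩⟩
  · calc (((𝒰.image (fun U => h '' (U ∩ S))).card) : ℝ≥0∞)
        ≤ (𝒰.card : ℝ≥0∞) := Nat.cast_le.2 Finset.card_image_le
      _ ≤ coverN S ρ + 1 := hcard

end Aux

section Core
open Real

variable {a b c θ s r R ρ : ℝ}

lemma pow_one_div_pow (x p q : ℝ) (hx : 0 ≤ x) : (x ^ (1/p)) ^ q = x ^ (q/p) := by
  rw [← Real.rpow_mul hx]; congr 1; ring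

lemma core_facts' (ha0 : 0 < a) (hab : a ≤ b) (hθ0 : 0 < θ) (hθ1 : θ < 1) (hs : 0 < s) :
    0 < a * θ / b ∧ a * θ / b < 1 ∧ s / a ≤ s * (1 - a*θ/b) / (a * (1-θ)) ∧
      0 < s * (1 - a*θ/b) / (a * (1-θ)) := by
  have hb0 : 0 < b := ha0.trans_le hab
  have h1 : 0 < a * θ / b := by positivity
  have h2 : a * θ / b ≤ θ := by rw [div_le_iff₀ hb0]; nlinarith
  have h3 : a * θ / b < 1 := lt_of_le_of_lt h2 hθ1
  have h5 : 0 < s * (1 - a*θ/b) / (a * (1-θ)) := by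
    apply div_pos (by nlinarith) (by nlinarith)
  refine ⟨h1, h3, ?_, h5⟩
  have h1θ : (1:ℝ) - θ ≠ 0 := by linarith
  have key : s * (1 - a*θ/b) / (a * (1-θ)) - s / a = s * (θ - a*θ/b) / (a * (1-θ)) := by
    field_simp
    ring
  nlinarith [div_nonneg (by nlinarith : 0 ≤ s * (θ - a*θ/b)) (by nlinarith : 0 ≤ a * (1-θ))]

lemma core1 (ha0 : 0 < a) (hab : a ≤ b) (hθ0 : 0 < θ) (hθ1 : θ < 1) (hs : 0 < s)
    (hr0 : 0 < r) (hR0 : 0 < R) (hrR : r ≤ R ^ (1/θ)) :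
    R ^ (s/b) * r ^ (-(s/a)) ≤ (R/r) ^ (s * (1 - a*θ/b) / (a * (1-θ))) := by
  obtain ⟨hφ0, hφ1, hsa, hs'0⟩ := core_facts' ha0 hab hθ0 hθ1 hs
  have hb0 : 0 < b := ha0.trans_le hab
  set s' := s * (1 - a*θ/b) / (a * (1-θ)) with hs'def
  have he0 : 0 ≤ s' - s/a := by linarith
  calc R ^ (s/b) * r ^ (-(s/a))
      = R ^ (s/b) * (r ^ (s' - s/a) * r ^ (-s')) := by
        rw [← Real.rpow_add hr0]; congr 1; ring
    _ ≤ R ^ (s/b) * (R ^ ((s' - s/a)/θ) * r ^ (-s')) := by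
        have h2 : r ^ (s' - s/a) ≤ (R ^ (1/θ)) ^ (s' - s/a) :=
          Real.rpow_le_rpow hr0.le hrR he0
        rw [← Real.rpow_mul hR0.le, show (1/θ) * (s' - s/a) = (s' - s/a)/θ by ring] at h2
        have h3 := Real.rpow_nonneg hR0.le (s/b)
        have h4 := Real.rpow_nonneg hr0.le (-s')
        exact mul_le_mul_of_nonneg_left (mul_le_mul_of_nonneg_right h2 h4) h3
    _ = R ^ (s/b + (s' - s/a)/θ) * r ^ (-s') := by rw [Real.rpow_add hR0]; ring
    _ = R ^ s' * r ^ (-s') := by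
        rw [show s/b + (s' - s/a)/θ = s' from by
          rw [hs'def]
          have h1θ : (1:ℝ) - θ ≠ 0 := by linarith
          field_simp
          ring]
    _ = (R/r) ^ s' := by
        rw [Real.div_rpow hR0.le hr0.le, Real.rpow_neg hr0.le, div_eq_mul_inv]

lemma coreA (ha0 : 0 < a) (hab : a ≤ b) (hc : 1 ≤ c) (hθ0 : 0 < θ) (hθ1 : θ < 1) (hs : 0 < s)
    (hr0 : 0 < r) (hR0 : 0 < R) (hrR : r ≤ R ^ (1/θ)) :
    ((c*R) ^ (1/b) / min ((r/c) ^ (1/a)) (((c*R) ^ (1/b)) ^ (1/(a*θ/b)))) ^ s ≤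
      (c ^ (s/b + s/a) + 1) * (R/r) ^ (s * (1 - a*θ/b) / (a * (1-θ))) := by
  obtain ⟨hφ0, hφ1, hsa, hs'0⟩ := core_facts' ha0 hab hθ0 hθ1 hs
  have hb0 : 0 < b := ha0.trans_le hab
  have hc0 : 0 < c := lt_of_lt_of_le one_pos hc
  have hcR0 : 0 < c*R := by positivity
  have hrc0 : 0 < r/c := by positivity
  set s' := s * (1 - a*θ/b) / (a * (1-θ)) with hs'def
  have hRr0 : 0 ≤ (R/r) ^ s' := Real.rpow_nonneg (by positivity) _
  have hcp : 0 ≤ c ^ (s/b + s/a) := Real.rpow_nonneg hc0.le _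
  rcases min_cases ((r/c) ^ (1/a)) (((c*R) ^ (1/b)) ^ (1/(a*θ/b))) with ⟨hmin, _⟩ | ⟨hmin, _⟩ <;>
    rw [hmin]
  · -- subcase r₅ = (r/c)^(1/a)
    have claim : (c*R) ^ (1/b) / (r/c) ^ (1/a) = c ^ (1/b + 1/a) * (R ^ (1/b) * r ^ (-(1/a))) := by
      rw [Real.mul_rpow hc0.le hR0.le, Real.div_rpow hr0.le hc0.le, Real.rpow_add hc0,
        Real.rpow_neg hr0.le]
      have h1 : r ^ (1/a) ≠ 0 := (Real.rpow_pos_of_pos hr0 _).ne'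
      have h2 : c ^ (1/a) ≠ 0 := (Real.rpow_pos_of_pos hc0 _).ne'
      field_simp
    rw [claim, Real.mul_rpow (by positivity) (by positivity),
      Real.mul_rpow (Real.rpow_nonneg hR0.le _) (Real.rpow_nonneg hr0.le _),
      ← Real.rpow_mul hc0.le, ← Real.rpow_mul hR0.le, ← Real.rpow_mul hr0.le,
      show (1/b + 1/a) * s = s/b + s/a by ring, show (1/b) * s = s/b by ring,
      show -(1/a) * s = -(s/a) by ring]
    have h3 := core1 ha0 hab hθ0 hθ1 hs hr0 hR0 hrR
    rw [← hs'def] at h3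
    nlinarith [mul_le_mul_of_nonneg_left h3 hcp]
  · -- subcase r₅ = R'^(1/φ)
    have hR'0 : 0 < (c*R) ^ (1/b) := Real.rpow_pos_of_pos hcR0 _
    have e1 : (c*R) ^ (1/b) / ((c*R) ^ (1/b)) ^ (1/(a*θ/b)) = ((c*R) ^ (1/b)) ^ (1 - 1/(a*θ/b)) := by
      rw [Real.rpow_sub hR'0, Real.rpow_one]
    rw [e1, ← Real.rpow_mul hR'0.le, ← Real.rpow_mul hcR0.le]
    set p := 1/b * ((1 - 1/(a*θ/b)) * s) with hp
    have hφinv : 1 < 1/(a*θ/b) := by rw [lt_div_iff₀ hφ0]; linarith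
    have hp0 : p ≤ 0 := by
      rw [hp]
      have h1 : (1 - 1/(a*θ/b)) ≤ 0 := by linarith
      have hh := mul_nonpos_of_nonpos_of_nonneg h1 hs.le
      exact mul_nonpos_of_nonneg_of_nonpos (by positivity) hh
    have h5 : c ^ p ≤ 1 := Real.rpow_le_one_of_one_le_of_nonpos hc hp0
    have h6 : (c*R) ^ p ≤ R ^ p := by
      rw [Real.mul_rpow hc0.le hR0.le]
      nlinarith [Real.rpow_nonneg hR0.le p]
    have hident : p = (1 - 1/θ) * s' := by
      rw [hp, hs'def]
      have h1θ : (1:ℝ) - θ ≠ 0 := by linarith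
      have hφne : a*θ/b ≠ 0 := hφ0.ne'
      field_simp
      ring
    have h7 : R ^ p ≤ (R/r) ^ s' := by
      rw [hident, Real.rpow_mul hR0.le]
      apply Real.rpow_le_rpow (Real.rpow_nonneg hR0.le _) ?_ hs'0.le
      have h8 : R ^ ((1:ℝ) - 1/θ) = R / R ^ (1/θ) := by rw [Real.rpow_sub hR0, Real.rpow_one]
      rw [h8]
      have hx := lt_of_lt_of_le hr0 hrR
      gcongr
    nlinarith [le_trans h6 h7]

lemma coreB (ha0 : 0 < a) (hab : a ≤ b) (hc : 1 ≤ c) (hθ0 : 0 < θ) (hθ1 : θ < 1) (hs : 0 < s)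
    (hr0 : 0 < r) (hr1 : r < 1) (hR0 : 0 < R) (hrR2 : r ≤ R) (hcR : 1 ≤ c*R)
    (hρ0 : 0 < ρ) (hρ1 : ρ < 1) :
    (ρ / min ((r/c) ^ (1/a)) (ρ ^ (1/(a*θ/b)))) ^ s ≤
      (c ^ (s/a + s * (1 - a*θ/b) / (a * (1-θ))) + ρ ^ ((1 - 1/(a*θ/b)) * s)) *
        (R/r) ^ (s * (1 - a*θ/b) / (a * (1-θ))) := by
  obtain ⟨hφ0, hφ1, hsa, hs'0⟩ := core_facts' ha0 hab hθ0 hθ1 hs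
  have hb0 : 0 < b := ha0.trans_le hab
  have hc0 : 0 < c := lt_of_lt_of_le one_pos hc
  have hrc0 : 0 < r/c := by positivity
  set s' := s * (1 - a*θ/b) / (a * (1-θ)) with hs'def
  have hRr1 : (1:ℝ) ≤ R/r := (one_le_div hr0).2 hrR2
  have hP1 : (1:ℝ) ≤ (R/r) ^ s' := Real.one_le_rpow hRr1 hs'0.le
  have hρp : 0 ≤ ρ ^ ((1 - 1/(a*θ/b)) * s) := Real.rpow_nonneg hρ0.le _
  have hcsp : 0 ≤ c ^ (s/a + s') := Real.rpow_nonneg hc0.le _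
  rcases min_cases ((r/c) ^ (1/a)) (ρ ^ (1/(a*θ/b))) with ⟨hmin, _⟩ | ⟨hmin, _⟩ <;> rw [hmin]
  · have hm0 : 0 < (r/c) ^ (1/a) := Real.rpow_pos_of_pos hrc0 _
    have step1 : (ρ / (r/c) ^ (1/a)) ^ s ≤ (1 / (r/c) ^ (1/a)) ^ s := by
      apply Real.rpow_le_rpow (by positivity) ?_ hs.le
      gcongr
    have step2 : (1 / (r/c) ^ (1/a)) ^ s = c ^ (s/a) * r ^ (-(s/a)) := by
      rw [one_div, ← Real.inv_rpow hrc0.le, inv_div, pow_one_div_pow _ _ _ (by positivity),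
        Real.div_rpow hc0.le hr0.le, Real.rpow_neg hr0.le, div_eq_mul_inv]
    have step3 : r ^ (-(s/a)) ≤ r ^ (-s') :=
      Real.rpow_le_rpow_of_exponent_ge hr0 hr1.le (by linarith)
    have step4 : r ^ (-s') ≤ (c*R) ^ s' * r ^ (-s') := by
      nlinarith [Real.one_le_rpow hcR hs'0.le, Real.rpow_nonneg hr0.le (-s')]
    have step5 : c ^ (s/a) * ((c*R) ^ s' * r ^ (-s')) = c ^ (s/a + s') * (R/r) ^ s' := by
      rw [Real.rpow_add hc0, Real.mul_rpow hc0.le hR0.le, Real.div_rpow hR0.le hr0.le,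
        Real.rpow_neg hr0.le, div_eq_mul_inv]
      ring
    have hca : 0 ≤ c ^ (s/a) := Real.rpow_nonneg hc0.le _
    calc (ρ / (r/c) ^ (1/a)) ^ s ≤ c ^ (s/a) * r ^ (-(s/a)) := by rw [← step2]; exact step1
      _ ≤ c ^ (s/a) * ((c*R) ^ s' * r ^ (-s')) := by
          refine mul_le_mul_of_nonneg_left (le_trans step3 step4) hca
      _ = c ^ (s/a + s') * (R/r) ^ s' := step5
      _ ≤ (c ^ (s/a + s') + ρ ^ ((1 - 1/(a*θ/b)) * s)) * (R/r) ^ s' := by nlinarith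
  · have e1 : ρ / ρ ^ (1/(a*θ/b)) = ρ ^ (1 - 1/(a*θ/b)) := by
      rw [Real.rpow_sub hρ0, Real.rpow_one]
    rw [e1, ← Real.rpow_mul hρ0.le]
    nlinarith

end Core

section Transfer
open Real Set Metric
open scoped ENNReal

lemma bounded_net {Z : Type*} [MetricSpace Z] [ProperSpace Z] {A : Set Z}
    (hA : Bornology.IsBounded A) {ε : ℝ} (hε : 0 < ε) :
    ∃ t ⊆ A, t.Finite ∧ A ⊆ ⋃ y ∈ t, ball y ε := by
  have h1 : TotallyBounded A :=
    (isCompact_of_isClosed_isBounded isClosed_closure hA.closure).totallyBounded.subset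
      subset_closure
  obtain ⟨t, hts, htf, hcov⟩ := totallyBounded_iff_subset.mp h1 {p : Z × Z | dist p.1 p.2 < ε}
    (Metric.dist_mem_uniformity hε)
  exact ⟨t, hts, htf, by simpa [Metric.ball, dist_comm] using hcov⟩

lemma transfer {Z : Type*} [MetricSpace Z] [ProperSpace Z] (A : Set Z)
    (hA : Bornology.IsBounded A) (h : Z → Z) (a b c θ s CA : ℝ)
    (ha0 : 0 < a) (hab : a ≤ b) (hc : 1 ≤ c) (hθ0 : 0 < θ) (hθ1 : θ < 1) (hs : 0 < s)
    (hCA : 0 < CA)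
    (hh : ∀ x ∈ A, ∀ y ∈ A, c⁻¹ * dist x y ^ b ≤ dist (h x) (h y) ∧
      dist (h x) (h y) ≤ c * dist x y ^ a)
    (hprop : ∀ x ∈ A, ∀ r R : ℝ, 0 < r → r ≤ R ^ (1/(a*θ/b)) → R ^ (1/(a*θ/b)) < R → R < 1 →
      coverN (closedBall x R ∩ A) r ≤ ENNReal.ofReal (CA * (R/r) ^ s)) :
    ∃ Cf : ℝ, 0 < Cf ∧ ∀ y ∈ h '' A, ∀ r R : ℝ, 0 < r → r ≤ R ^ (1/θ) → R ^ (1/θ) < R → R < 1 →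
      coverN (closedBall y R ∩ h '' A) r ≤
        ENNReal.ofReal (Cf * (R/r) ^ (s * (1 - a*θ/b) / (a * (1-θ)))) := by
  obtain ⟨hφ0, hφ1, hsa, hs'0⟩ := core_facts' ha0 hab hθ0 hθ1 hs
  have hb0 : 0 < b := ha0.trans_le hab
  have hc0 : 0 < c := lt_of_lt_of_le one_pos hc
  set s' := s * (1 - a*θ/b) / (a * (1-θ)) with hs'def
  clear_value s'
  obtain ⟨t0, ht0A, ht0fin, ht0cov⟩ := bounded_net hA (by norm_num : (0:ℝ) < 1/2)
  set T := ht0fin.toFinset with hTdef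
  set Kc := c ^ (s/b + s/a) + 1 + (c ^ (s/a + s') + ((1:ℝ)/2) ^ ((1 - 1/(a*θ/b)) * s))
    with hKcdef
  have hK1 : (0:ℝ) < c ^ (s/b + s/a) := Real.rpow_pos_of_pos hc0 _
  have hK2 : (0:ℝ) < c ^ (s/a + s') := Real.rpow_pos_of_pos hc0 _
  have hK3 : (0:ℝ) < ((1:ℝ)/2) ^ ((1 - 1/(a*θ/b)) * s) := Real.rpow_pos_of_pos (by norm_num) _
  have hKc0 : 0 < Kc := by rw [hKcdef]; positivity
  clear_value Kc
  refine ⟨((T.card : ℝ) + 1) * (CA * Kc + 2), by positivity, ?_⟩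
  rintro y ⟨x, hxA, rfl⟩ r R hr0 hrR hRθ hR1
  have hRθ0 : 0 < R ^ (1/θ) := lt_of_lt_of_le hr0 hrR
  have hR0 : 0 < R := lt_trans hRθ0 hRθ
  have hrR2 : r ≤ R := le_of_lt (lt_of_le_of_lt hrR hRθ)
  have hr1 : r < 1 := lt_of_le_of_lt hrR2 hR1
  have hRr1 : (1:ℝ) ≤ R / r := (one_le_div hr0).2 hrR2
  have hP1 : (1:ℝ) ≤ (R/r) ^ s' := Real.one_le_rpow hRr1 hs'0.le
  have hPnn : (0:ℝ) ≤ (R/r) ^ s' := le_trans zero_le_one hP1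
  have step : ∀ T' : Finset Z, (∀ t ∈ T', t ∈ A) → ∀ ℛ : ℝ, 0 < ℛ → ℛ < 1 →
      (closedBall (h x) R ∩ h '' A ⊆ ⋃ t ∈ T', h '' (closedBall t ℛ ∩ A)) →
      coverN (closedBall (h x) R ∩ h '' A) r ≤
        (T'.card : ℝ≥0∞) *
          (ENNReal.ofReal (CA * (ℛ / min ((r/c) ^ (1/a)) (ℛ ^ (1/(a*θ/b)))) ^ s) + 2) := by
    intro T' hT'A ℛ hℛ0 hℛ1 hcov
    set r₅ := min ((r/c) ^ (1/a)) (ℛ ^ (1/(a*θ/b))) with hr₅def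
    have hr₅0 : 0 < r₅ :=
      lt_min (Real.rpow_pos_of_pos (by positivity) _) (Real.rpow_pos_of_pos hℛ0 _)
    have hℛφ : ℛ ^ (1/(a*θ/b)) < ℛ := by
      have h1 : 1 < 1/(a*θ/b) := by rw [lt_div_iff₀ hφ0]; linarith
      have h2 := Real.rpow_lt_rpow_of_exponent_gt hℛ0 hℛ1 h1
      rwa [Real.rpow_one] at h2
    have hca : c * r₅ ^ a ≤ r := by
      have h1 : r₅ ^ a ≤ r/c := by
        have h2 : r₅ ^ a ≤ ((r/c) ^ (1/a)) ^ a :=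
          Real.rpow_le_rpow hr₅0.le (min_le_left _ _) ha0.le
        rwa [one_div, Real.rpow_inv_rpow (by positivity) ha0.ne'] at h2
      calc c * r₅ ^ a ≤ c * (r/c) := mul_le_mul_of_nonneg_left h1 hc0.le
        _ = r := by field_simp
    have inner : ∀ t ∈ T', coverN (h '' (closedBall t ℛ ∩ A)) r + 1 ≤
        ENNReal.ofReal (CA * (ℛ/r₅) ^ s) + 2 := by
      intro t ht
      have h1 : coverN (h '' (closedBall t ℛ ∩ A)) r ≤ coverN (closedBall t ℛ ∩ A) r₅ + 1 :=
        coverN_image_le h hc0 ha0 hr₅0.le hca inter_subset_right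
          (fun u hu v hv => (hh u hu v hv).2)
      have h2 := hprop t (hT'A t ht) r₅ ℛ hr₅0 (min_le_right _ _) hℛφ hℛ1
      calc coverN (h '' (closedBall t ℛ ∩ A)) r + 1
          ≤ (coverN (closedBall t ℛ ∩ A) r₅ + 1) + 1 := by gcongr
        _ ≤ (ENNReal.ofReal (CA * (ℛ/r₅) ^ s) + 1) + 1 := by gcongr
        _ = ENNReal.ofReal (CA * (ℛ/r₅) ^ s) + 2 := by rw [add_assoc, one_add_one_eq_two]
    calc coverN (closedBall (h x) R ∩ h '' A) r
        ≤ coverN (⋃ t ∈ T', h '' (closedBall t ℛ ∩ A)) r := coverN_mono hcov r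
      _ ≤ ∑ t ∈ T', (coverN (h '' (closedBall t ℛ ∩ A)) r + 1) := coverN_biUnion_le _ _ _
      _ ≤ ∑ _t ∈ T', (ENNReal.ofReal (CA * (ℛ/r₅) ^ s) + 2) := Finset.sum_le_sum inner
      _ = (T'.card : ℝ≥0∞) * (ENNReal.ofReal (CA * (ℛ/r₅) ^ s) + 2) := by
          rw [Finset.sum_const, nsmul_eq_mul]
  by_cases hcase : c * R < 1
  · -- Case A : single ball of radius (c*R)^(1/b)
    have hcR0 : 0 < c * R := by positivity
    have hR'0 : 0 < (c*R) ^ (1/b) := Real.rpow_pos_of_pos hcR0 _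
    have hR'1 : (c*R) ^ (1/b) < 1 := Real.rpow_lt_one hcR0.le hcase (by positivity)
    have hcovA : closedBall (h x) R ∩ h '' A ⊆
        ⋃ t ∈ ({x} : Finset Z), h '' (closedBall t ((c*R) ^ (1/b)) ∩ A) := by
      rintro w ⟨hwB, u, huA, rfl⟩
      apply mem_iUnion₂.mpr
      refine ⟨x, Finset.mem_singleton_self x, ⟨u, ⟨?_, huA⟩, rfl⟩⟩
      have h1 := (hh u huA x hxA).1
      have h2 : dist (h u) (h x) ≤ R := mem_closedBall.mp hwB
      have h3 : dist u x ^ b ≤ c * R := by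
        have h4 : c⁻¹ * dist u x ^ b ≤ R := le_trans h1 h2
        calc dist u x ^ b = c * (c⁻¹ * dist u x ^ b) := by field_simp
          _ ≤ c * R := mul_le_mul_of_nonneg_left h4 hc0.le
      rw [mem_closedBall]
      calc dist u x = (dist u x ^ b) ^ b⁻¹ := (Real.rpow_rpow_inv dist_nonneg hb0.ne').symm
        _ ≤ (c*R) ^ b⁻¹ :=
            Real.rpow_le_rpow (Real.rpow_nonneg dist_nonneg _) h3 (by positivity)
        _ = (c*R) ^ (1/b) := by rw [one_div]
    have hstep := step {x} (by simp [hxA]) ((c*R) ^ (1/b)) hR'0 hR'1 hcovA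
    have hQ := coreA ha0 hab hc hθ0 hθ1 hs hr0 hR0 hrR
    rw [← hs'def] at hQ
    set Q := ((c*R) ^ (1/b) / min ((r/c) ^ (1/a)) (((c*R) ^ (1/b)) ^ (1/(a*θ/b)))) ^ s with hQdef
    have hQ0 : 0 ≤ Q := by
      rw [hQdef]
      exact Real.rpow_nonneg (div_nonneg hR'0.le
        (le_min (Real.rpow_nonneg (by positivity) _) (Real.rpow_nonneg hR'0.le _))) _
    clear_value Q
    refine le_trans hstep ?_
    simp only [Finset.card_singleton, Nat.cast_one, one_mul]
    have hreal : CA * Q + 2 ≤ ((T.card : ℝ) + 1) * (CA * Kc + 2) * ((R/r) ^ s') := by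
      have hKge : c ^ (s/b + s/a) + 1 ≤ Kc := by rw [hKcdef]; linarith
      have h5 : Q ≤ Kc * ((R/r) ^ s') :=
        le_trans hQ (mul_le_mul_of_nonneg_right hKge hPnn)
      have h6 : CA * Q ≤ CA * (Kc * ((R/r) ^ s')) := mul_le_mul_of_nonneg_left h5 hCA.le
      have h7 : (0:ℝ) ≤ (CA * Kc + 2) * ((R/r) ^ s') := by positivity
      have e : (CA * Kc + 2) * ((R/r) ^ s') = CA * (Kc * ((R/r) ^ s')) + 2 * ((R/r) ^ s') := by
        ring
      have g1 : CA * Q + 2 ≤ (CA * Kc + 2) * ((R/r) ^ s') := by linarith only [h6, e, hP1]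
      have g2 : (CA * Kc + 2) * ((R/r) ^ s') ≤ ((T.card : ℝ) + 1) * ((CA * Kc + 2) * ((R/r) ^ s')) :=
        le_mul_of_one_le_left h7 (by linarith only [Nat.cast_nonneg (α := ℝ) T.card])
      exact le_trans g1 (le_trans g2 (le_of_eq (mul_assoc _ _ _).symm))
    calc ENNReal.ofReal (CA * Q) + 2 = ENNReal.ofReal (CA * Q + 2) := by
          rw [ENNReal.ofReal_add (by positivity) zero_le_two, ENNReal.ofReal_ofNat]
      _ ≤ _ := ENNReal.ofReal_le_ofReal hreal
  · -- Case B : fixed net at scale 1/2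
    push_neg at hcase
    have hcovB : closedBall (h x) R ∩ h '' A ⊆
        ⋃ t ∈ T, h '' (closedBall t ((1:ℝ)/2) ∩ A) := by
      rintro w ⟨_, u, huA, rfl⟩
      obtain ⟨t, htt0, hut⟩ := mem_iUnion₂.mp (ht0cov huA)
      exact mem_iUnion₂.mpr ⟨t, ht0fin.mem_toFinset.mpr htt0,
        ⟨u, ⟨ball_subset_closedBall hut, huA⟩, rfl⟩⟩
    have hstep := step T (fun t ht => ht0A (ht0fin.mem_toFinset.mp ht)) ((1:ℝ)/2)
      (by norm_num) (by norm_num) hcovB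
    have hQ := coreB ha0 hab hc hθ0 hθ1 hs hr0 hr1 hR0 hrR2 hcase
      (by norm_num : (0:ℝ) < 1/2) (by norm_num : (1:ℝ)/2 < 1)
    rw [← hs'def] at hQ
    set Q := ((1:ℝ)/2 / min ((r/c) ^ (1/a)) (((1:ℝ)/2) ^ (1/(a*θ/b)))) ^ s with hQdef
    have hQ0 : 0 ≤ Q := by
      rw [hQdef]
      refine Real.rpow_nonneg (div_nonneg (by norm_num)
        (le_min (Real.rpow_nonneg (by positivity) _) (Real.rpow_nonneg (by norm_num) _))) _
    clear_value Q
    refine le_trans hstep ?_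
    have hreal : (T.card : ℝ) * (CA * Q + 2) ≤ ((T.card : ℝ) + 1) * (CA * Kc + 2) * ((R/r) ^ s') := by
      have hKge : c ^ (s/a + s') + ((1:ℝ)/2) ^ ((1 - 1/(a*θ/b)) * s) ≤ Kc := by
        rw [hKcdef]; linarith
      have h5 : Q ≤ Kc * ((R/r) ^ s') :=
        le_trans hQ (mul_le_mul_of_nonneg_right hKge hPnn)
      have h6 : CA * Q ≤ CA * (Kc * ((R/r) ^ s')) := mul_le_mul_of_nonneg_left h5 hCA.le
      have h7 : (0:ℝ) ≤ (CA * Kc + 2) * ((R/r) ^ s') := by positivity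
      have e : (CA * Kc + 2) * ((R/r) ^ s') = CA * (Kc * ((R/r) ^ s')) + 2 * ((R/r) ^ s') := by
        ring
      have g1 : CA * Q + 2 ≤ (CA * Kc + 2) * ((R/r) ^ s') := by linarith only [h6, e, hP1]
      have g2 : (T.card : ℝ) * (CA * Q + 2) ≤ (T.card : ℝ) * ((CA * Kc + 2) * ((R/r) ^ s')) :=
        mul_le_mul_of_nonneg_left g1 (Nat.cast_nonneg _)
      have g3 : (T.card : ℝ) * ((CA * Kc + 2) * ((R/r) ^ s')) ≤
          ((T.card : ℝ) + 1) * ((CA * Kc + 2) * ((R/r) ^ s')) :=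
        mul_le_mul_of_nonneg_right (by linarith only []) h7
      exact le_trans g2 (le_trans g3 (le_of_eq (mul_assoc _ _ _).symm))
    calc (T.card : ℝ≥0∞) * (ENNReal.ofReal (CA * Q) + 2)
        = ENNReal.ofReal ((T.card : ℝ) * (CA * Q + 2)) := by
          rw [ENNReal.ofReal_mul (Nat.cast_nonneg _), ENNReal.ofReal_natCast,
            ENNReal.ofReal_add (by positivity) zero_le_two, ENNReal.ofReal_ofNat]
      _ ≤ _ := ENNReal.ofReal_le_ofReal hreal

end Transfer

section Main
open Real Set Metric Bornology
open scoped ENNReal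

lemma SS_mono {Z : Type*} [PseudoMetricSpace Z] (F : Set Z) {φ φ' : ℝ} (h0 : 0 < φ)
    (h1 : φ ≤ φ') (h2 : φ' < 1) : SS φ' F ⊆ SS φ F := by
  rintro t ⟨ht0, C, hC, hP⟩
  refine ⟨ht0, C, hC, ?_⟩
  intro x hx r R hr hrR hRθ hR1
  have hRθ0 : 0 < R ^ (1/φ) := lt_of_lt_of_le hr hrR
  have hR0 : 0 < R := lt_trans hRθ0 hRθ
  have hφ'0 : 0 < φ' := lt_of_lt_of_le h0 h1
  have k1 : R ^ (1/φ) ≤ R ^ (1/φ') :=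
    Real.rpow_le_rpow_of_exponent_ge hR0 hR1.le (one_div_le_one_div_of_le h0 h1)
  have k2 : R ^ (1/φ') < R := by
    have h3 : 1 < 1/φ' := by rw [lt_div_iff₀ hφ'0]; linarith
    have h4 := Real.rpow_lt_rpow_of_exponent_gt hR0 hR1 h3
    rwa [Real.rpow_one] at h4
  exact hP x hx r R hr (le_trans hrR k1) k2 hR1

lemma sInf_le_mul_sInf {AS BS : Set ℝ} {c : ℝ} (hc : 0 < c)
    (hab : ∀ x ∈ AS, c * x ∈ BS) (hemp : AS = ∅ → BS = ∅)
    (hB0 : ∀ x ∈ BS, 0 ≤ x) : sInf BS ≤ c * sInf AS := by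
  rcases Set.eq_empty_or_nonempty AS with hA | hA
  · rw [hemp hA, hA, Real.sInf_empty]
    norm_num
  · have hBb : BddBelow BS := ⟨0, fun x hx => hB0 x hx⟩
    have h2 : ∀ x ∈ AS, sInf BS / c ≤ x := fun x hx =>
      (div_le_iff₀ hc).2 (by rw [mul_comm]; exact csInf_le hBb (hab x hx))
    have h3 := le_csInf hA h2
    rw [mul_comm]
    exact (div_le_iff₀ hc).1 h3

/-- distortion of the regularized Assouad spectrum under
`(α,β)`-bi-Hölder homeomorphisms. -/
theorem stmt17 {n : ℕ} (X : Set (EuclideanSpace ℝ (Fin n))) (hX : Bornology.IsBounded X)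
    (α β C : ℝ) (hα0 : 0 < α) (hα1 : α ≤ 1) (hβ : 1 ≤ β) (hC : 0 < C)
    (f : EuclideanSpace ℝ (Fin n) → EuclideanSpace ℝ (Fin n))
    (hf : ∀ x ∈ X, ∀ x' ∈ X,
      C⁻¹ * dist x x' ^ β ≤ dist (f x) (f x') ∧ dist (f x) (f x') ≤ C * dist x x' ^ α)
    (θ : ℝ) (hθ0 : 0 < θ) (hθ1 : θ < α / β) :
    ((1 - β * θ / α) / (β * (1 - θ))) * dimAreg (β * θ / α) X ≤ dimAreg θ (f '' X) ∧
    dimAreg θ (f '' X) ≤ ((1 - α * θ / β) / (α * (1 - θ))) * dimAreg (α * θ / β) X := by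
  classical
  have hβ0 : 0 < β := lt_of_lt_of_le one_pos hβ
  have hab : α ≤ β := le_trans hα1 hβ
  have hαβ1 : α / β ≤ 1 := by rw [div_le_one hβ0]; linarith
  have hθ1' : θ < 1 := lt_of_lt_of_le hθ1 hαβ1
  have hθβα : θ * β < α := (lt_div_iff₀ hβ0).1 hθ1
  have hβθα1 : β * θ / α < 1 := by rw [div_lt_one hα0]; nlinarith
  have hβθα0 : 0 < β * θ / α := by positivity
  have hαθβ0 : 0 < α * θ / β := by positivity
  have hmono : α * θ / β ≤ β * θ / α := by
    rw [div_le_div_iff₀ hβ0 hα0]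
    nlinarith [mul_nonneg (mul_nonneg hθ0.le (sub_nonneg.2 hab)) (by linarith : (0:ℝ) ≤ α + β)]
  have hαθβ1 : α * θ / β < 1 := lt_of_le_of_lt hmono hβθα1
  set C₁ := max C 1 with hC₁def
  have hC₁1 : 1 ≤ C₁ := le_max_right _ _
  have hC₁0 : 0 < C₁ := lt_of_lt_of_le one_pos hC₁1
  have hf₁ : ∀ x ∈ X, ∀ x' ∈ X, C₁⁻¹ * dist x x' ^ β ≤ dist (f x) (f x') ∧
      dist (f x) (f x') ≤ C₁ * dist x x' ^ α := by
    intro x hx x' hx'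
    obtain ⟨h1, h2⟩ := hf x hx x' hx'
    have hd : (0:ℝ) ≤ dist x x' ^ β := Real.rpow_nonneg dist_nonneg _
    have hd2 : (0:ℝ) ≤ dist x x' ^ α := Real.rpow_nonneg dist_nonneg _
    constructor
    · refine le_trans (mul_le_mul_of_nonneg_right ?_ hd) h1
      exact inv_anti₀ hC (le_max_left _ _)
    · exact le_trans h2 (mul_le_mul_of_nonneg_right (le_max_left _ _) hd2)
  have hfinj : ∀ u ∈ X, ∀ v ∈ X, f u = f v → u = v := by
    intro u hu v hv he
    have h1 := (hf₁ u hu v hv).1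
    rw [he, dist_self] at h1
    have hd : (0:ℝ) ≤ dist u v ^ β := Real.rpow_nonneg dist_nonneg _
    have hci : (0:ℝ) < C₁⁻¹ := inv_pos.mpr hC₁0
    have h2 : dist u v ^ β = 0 := le_antisymm (by nlinarith) hd
    exact dist_eq_zero.mp ((Real.rpow_eq_zero dist_nonneg hβ0.ne').mp h2)
  obtain ⟨g, hgf, hgY⟩ : ∃ g : EuclideanSpace ℝ (Fin n) → EuclideanSpace ℝ (Fin n),
      (∀ x ∈ X, g (f x) = x) ∧ (∀ y ∈ f '' X, g y ∈ X) := by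
    refine ⟨fun y => if hy : y ∈ f '' X then hy.choose else y, ?_, ?_⟩
    · intro x hx
      have hy : f x ∈ f '' X := mem_image_of_mem f hx
      simp only [dif_pos hy]
      exact hfinj _ hy.choose_spec.1 _ hx hy.choose_spec.2
    · intro y hy; simp only [dif_pos hy]; exact hy.choose_spec.1
  have hgYX : g '' (f '' X) = X := by
    apply Subset.antisymm
    · rintro _ ⟨y, hy, rfl⟩; exact hgY y hy
    · intro x hx; exact ⟨f x, mem_image_of_mem f hx, hgf x hx⟩
  have hYb : Bornology.IsBounded (f '' X) := by
    obtain ⟨M, hM⟩ := Metric.isBounded_iff.mp hX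
    apply Metric.isBounded_iff.mpr
    refine ⟨C₁ * (max M 0) ^ α, ?_⟩
    rintro _ ⟨u, hu, rfl⟩ _ ⟨v, hv, rfl⟩
    refine le_trans (hf₁ u hu v hv).2 ?_
    have h5 : dist u v ≤ max M 0 := le_trans (hM hu hv) (le_max_left _ _)
    have h6 := Real.rpow_le_rpow dist_nonneg h5 hα0.le
    nlinarith
  set cg := C₁ ^ (1/α) with hcgdef
  have hcg1 : 1 ≤ cg := Real.one_le_rpow hC₁1 (by positivity)
  have hcg0 : 0 < cg := lt_of_lt_of_le one_pos hcg1
  have hg : ∀ y ∈ f '' X, ∀ y' ∈ f '' X, cg⁻¹ * dist y y' ^ (1/α) ≤ dist (g y) (g y') ∧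
      dist (g y) (g y') ≤ cg * dist y y' ^ (1/β) := by
    rintro _ ⟨u, hu, rfl⟩ _ ⟨v, hv, rfl⟩
    rw [hgf u hu, hgf v hv]
    obtain ⟨h1, h2⟩ := hf₁ u hu v hv
    have hD0 : (0:ℝ) ≤ dist (f u) (f v) := dist_nonneg
    have hd0 : (0:ℝ) ≤ dist u v := dist_nonneg
    constructor
    · have k1 : dist (f u) (f v) / C₁ ≤ dist u v ^ α := by
        rw [div_le_iff₀ hC₁0, mul_comm]; linarith
      have k2 : (dist (f u) (f v) / C₁) ^ (1/α) ≤ dist u v := by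
        have h3 : (dist (f u) (f v) / C₁) ^ (1/α) ≤ (dist u v ^ α) ^ (1/α) :=
          Real.rpow_le_rpow (by positivity) k1 (by positivity)
        have h4 : (dist u v ^ α) ^ (1/α) = dist u v := by
          rw [one_div]; exact Real.rpow_rpow_inv hd0 hα0.ne'
        rwa [h4] at h3
      have e : (dist (f u) (f v) / C₁) ^ (1/α) = cg⁻¹ * dist (f u) (f v) ^ (1/α) := by
        rw [Real.div_rpow hD0 hC₁0.le, hcgdef, div_eq_inv_mul]
      rwa [e] at k2
    · have k1 : dist u v ^ β ≤ C₁ * dist (f u) (f v) := by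
        calc dist u v ^ β = C₁ * (C₁⁻¹ * dist u v ^ β) := by field_simp
          _ ≤ C₁ * dist (f u) (f v) := mul_le_mul_of_nonneg_left h1 hC₁0.le
      have k2 : dist u v ≤ (C₁ * dist (f u) (f v)) ^ (1/β) := by
        calc dist u v = (dist u v ^ β) ^ β⁻¹ := (Real.rpow_rpow_inv hd0 hβ0.ne').symm
          _ ≤ (C₁ * dist (f u) (f v)) ^ β⁻¹ :=
              Real.rpow_le_rpow (Real.rpow_nonneg hd0 _) k1 (by positivity)
          _ = (C₁ * dist (f u) (f v)) ^ (1/β) := by rw [one_div]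
      refine le_trans k2 ?_
      rw [Real.mul_rpow hC₁0.le hD0]
      have k3 : C₁ ^ (1/β) ≤ cg := by
        rw [hcgdef]
        exact Real.rpow_le_rpow_of_exponent_le hC₁1 (one_div_le_one_div_of_le hα0 hab)
      exact mul_le_mul_of_nonneg_right k3 (Real.rpow_nonneg hD0 _)
  have up : ∀ t ∈ SS (α*θ/β) X, t * (1 - α*θ/β) / (α * (1-θ)) ∈ SS θ (f '' X) := by
    rintro t ⟨ht0, CA, hCA, hprop⟩
    obtain ⟨Cf, hCf, hmain⟩ :=
      transfer X hX f α β C₁ θ t CA hα0 hab hC₁1 hθ0 hθ1' ht0 hCA hf₁ hprop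
    have hpos : 0 < t * (1 - α*θ/β) / (α * (1-θ)) :=
      (core_facts' hα0 hab hθ0 hθ1' ht0).2.2.2
    exact ⟨hpos, Cf, hCf, hmain⟩
  have down : ∀ t ∈ SS θ (f '' X), t * β * (1-θ) / (1 - β*θ/α) ∈ SS (β*θ/α) X := by
    rintro t ⟨ht0, CA, hCA, hprop⟩
    have hφeq : 1/β * (β*θ/α) / (1/α) = θ := by field_simp
    rw [← hφeq] at hprop
    obtain ⟨Cf, hCf, hmain⟩ := transfer (f '' X) hYb g (1/β) (1/α) cg (β*θ/α) t CA
      (by positivity) (one_div_le_one_div_of_le hα0 hab) hcg1 hβθα0 hβθα1 ht0 hCA hg hprop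
    rw [hgYX] at hmain
    have hne : (1:ℝ) - β*θ/α ≠ 0 := ne_of_gt (by linarith)
    have e : t * (1 - 1/β * (β*θ/α) / (1/α)) / (1/β * (1 - β*θ/α)) =
        t * β * (1-θ) / (1 - β*θ/α) := by
      field_simp
    have hpos : 0 < t * (1 - 1/β * (β*θ/α) / (1/α)) / (1/β * (1 - β*θ/α)) :=
      (core_facts' (show (0:ℝ) < 1/β by positivity) (one_div_le_one_div_of_le hα0 hab)
        hβθα0 hβθα1 ht0).2.2.2
    have hm : t * (1 - 1/β * (β*θ/α) / (1/α)) / (1/β * (1 - β*θ/α)) ∈ SS (β*θ/α) X :=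
      ⟨hpos, Cf, hCf, hmain⟩
    rwa [e] at hm
  constructor
  · have key : sInf (SS (β*θ/α) X) ≤ (β*(1-θ)/(1 - β*θ/α)) * sInf (SS θ (f '' X)) := by
      apply sInf_le_mul_sInf
      · exact div_pos (by nlinarith) (by linarith)
      · intro x hx
        have h1 := down x hx
        have e2 : β*(1-θ)/(1 - β*θ/α) * x = x * β * (1-θ) / (1 - β*θ/α) := by ring
        rwa [e2]
      · intro hAe
        by_contra hBne
        rw [← Ne, ← nonempty_iff_ne_empty] at hBne
        obtain ⟨x, hx⟩ := hBne
        have h1 := SS_mono X hαθβ0 hmono hβθα1 hx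
        have h2 := up x h1
        rw [hAe] at h2
        exact absurd h2 (notMem_empty _)
      · intro x hx; exact hx.1.le
    rw [dimAreg_eq, dimAreg_eq]
    have hc1 : 0 < (1 - β*θ/α)/(β*(1-θ)) := div_pos (by linarith) (by nlinarith)
    have h4 := mul_le_mul_of_nonneg_left key hc1.le
    have hne1 : (1:ℝ) - β*θ/α ≠ 0 := ne_of_gt (by linarith)
    have hne2 : β*(1-θ) ≠ 0 := ne_of_gt (by nlinarith)
    have e3 : (1 - β*θ/α)/(β*(1-θ)) * ((β*(1-θ)/(1 - β*θ/α)) * sInf (SS θ (f '' X))) =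
        sInf (SS θ (f '' X)) := by
      have hne3 : α - β*θ ≠ 0 := by nlinarith
      have hne4 : (1:ℝ) - θ ≠ 0 := by linarith
      field_simp
    rw [e3] at h4
    exact h4
  · have key : sInf (SS θ (f '' X)) ≤ ((1 - α*θ/β)/(α*(1-θ))) * sInf (SS (α*θ/β) X) := by
      apply sInf_le_mul_sInf
      · exact div_pos (by linarith) (mul_pos hα0 (by linarith))
      · intro x hx
        have h1 := up x hx
        have e2 : (1 - α*θ/β)/(α*(1-θ)) * x = x * (1 - α*θ/β) / (α*(1-θ)) := by ring
        rwa [e2]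
      · intro hAe
        by_contra hBne
        rw [← Ne, ← nonempty_iff_ne_empty] at hBne
        obtain ⟨x, hx⟩ := hBne
        have h1 := down x hx
        have h2 := SS_mono X hαθβ0 hmono hβθα1 h1
        rw [hAe] at h2
        exact absurd h2 (notMem_empty _)
      · intro x hx; exact hx.1.le
    rw [dimAreg_eq, dimAreg_eq]
    exact key


end Main
end
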